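/- Let μ ≥ 2 and consider a tree where every node has between μ and 2μ children, all leaves are at depth L from the root τ, and there are m ≥ 1 marked leaves. The total number of distinct nodes lying on some path from a marked leaf to τ is at most m·(L - ⌈log_{2μ} m⌉) + C·m for some absolute constant C, i.e., O(m·(1 + log_{2μ}(N/m))) where N is the subtree size. -/

import Mathlib

open Finset

lemma card_lists_le (n k : ℕ) (T : Finset (List ℕ))
    (hlen : ∀ l ∈ T, l.length = k) (hval : ∀ l ∈ T, ∀ i ∈ l, i < n) :
    T.card ≤ n ^ k := by
  have h := Finset.card_le_card_of_injOn (s := T)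
    (t := Fintype.piFinset (fun _ : Fin k => Finset.range n))
    (fun l i => l.getD i 0) ?_ ?_
  · simpa using h
  · intro l hl
    simp only [Finset.mem_coe, Fintype.mem_piFinset, Finset.mem_range]
    intro i
    have hil : (i : ℕ) < l.length := by rw [hlen l hl]; exact i.2
    have : l.getD i 0 = l[(i:ℕ)] := List.getD_eq_getElem l 0 hil
    rw [this]
    exact hval l hl _ (List.getElem_mem hil)
  · intro l₁ h₁ l₂ h₂ hf
    apply List.ext_getElem (by rw [hlen l₁ h₁, hlen l₂ h₂])
    intro i hi1 hi2
    have hik : i < k := by rw [← hlen l₁ h₁]; exact hi1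
    have h3 := congrFun hf ⟨i, hik⟩
    simp only at h3
    rwa [List.getD_eq_getElem l₁ 0 hi1, List.getD_eq_getElem l₂ 0 hi2] at h3

lemma mygeom_le (b : ℕ) (hb : 2 ≤ b) : ∀ t, 1 ≤ t →
    ∑ k ∈ range t, b ^ k ≤ 2 * b ^ (t - 1) := by
  intro t
  induction t with
  | zero => omega
  | succ t ih =>
    intro _
    rcases Nat.eq_zero_or_pos t with h | h
    · subst h; simp
    · rw [Finset.sum_range_succ]
      have h1 := ih h
      have h2 : 2 * b ^ (t - 1) ≤ b ^ t := by
        calc 2 * b ^ (t - 1) ≤ b * b ^ (t - 1) := Nat.mul_le_mul_right _ hb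
          _ = b ^ (t - 1 + 1) := (pow_succ' b _).symm
          _ = b ^ t := by congr 1; omega
      simpa using by omega


/-- Insertion-footprint lemma. Model nodes of the tree as positions: lists of child
indices (each < 2μ). A marked leaf is a path of length L from the top node τ; the
nodes on the path from a marked leaf to τ are exactly the prefixes of that path.
There is an absolute constant C such that for m marked leaves, the number of
distinct nodes lying on some path from a marked leaf to τ is at most
m·(L − ⌈log_{2μ} m⌉) + C·m, i.e. O(m·(1 + log_{2μ}(N/m))). -/
theorem insertion_footprint :
    ∃ C : ℕ, ∀ (μ L m : ℕ) (P : Finset (List ℕ)),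
      2 ≤ μ → 1 ≤ m → P.card = m →
      (∀ p ∈ P, p.length = L) →
      (∀ p ∈ P, ∀ i ∈ p, i < 2 * μ) →
      (P.biUnion fun p => (Finset.range (L + 1)).image fun k => p.take k).card
        ≤ m * (L - Nat.clog (2 * μ) m) + C * m := by
  use 3
  intro μ L m P hμ hm hcard hlen hval
  set b := 2 * μ with hbdef
  have hb : 2 ≤ b := by omega
  set t := Nat.clog b m with htdef
  -- step 1: swap union
  have hsub : (P.biUnion fun p => (range (L + 1)).image fun k => p.take k)
      ⊆ (range (L + 1)).biUnion fun k => P.image fun p => p.take k := by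
    intro x hx
    simp only [mem_biUnion, mem_image, mem_range] at hx ⊢
    obtain ⟨p, hp, k, hk, hx⟩ := hx
    exact ⟨k, hk, p, hp, hx⟩
  have step1 : (P.biUnion fun p => (range (L + 1)).image fun k => p.take k).card
      ≤ ∑ k ∈ range (L + 1), (P.image fun p => p.take k).card :=
    le_trans (Finset.card_le_card hsub) (Finset.card_biUnion_le)
  -- per-level bounds
  have hlev : ∀ k ∈ range (L + 1), (P.image fun p => p.take k).card ≤ min m (b ^ k) := by
    intro k hk
    rw [mem_range] at hk
    refine le_min ?_ ?_
    · calc (P.image fun p => p.take k).card ≤ P.card := Finset.card_image_le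
        _ = m := hcard
    · apply card_lists_le
      · intro l hl
        simp only [mem_image] at hl
        obtain ⟨p, hp, rfl⟩ := hl
        rw [List.length_take, hlen p hp]
        omega
      · intro l hl i hi
        simp only [mem_image] at hl
        obtain ⟨p, hp, rfl⟩ := hl
        exact hval p hp i (List.mem_of_mem_take hi)
  -- split the sum
  have hsplit : ∑ k ∈ range (L + 1), min m (b ^ k)
      ≤ (∑ k ∈ range t, b ^ k) + (L + 1 - t) * m := by
    rw [← Finset.sum_filter_add_sum_filter_not (range (L + 1)) (fun k => k < t)]
    gcongr ?_ + ?_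
    · calc ∑ k ∈ (range (L + 1)).filter (fun k => k < t), min m (b ^ k)
          ≤ ∑ k ∈ (range (L + 1)).filter (fun k => k < t), b ^ k :=
            Finset.sum_le_sum fun k _ => min_le_right _ _
        _ ≤ ∑ k ∈ range t, b ^ k := by
            apply Finset.sum_le_sum_of_subset
            intro k hk
            simp only [mem_filter, mem_range] at hk ⊢
            exact hk.2
    · calc ∑ k ∈ (range (L + 1)).filter (fun k => ¬ k < t), min m (b ^ k)
          ≤ ∑ _k ∈ (range (L + 1)).filter (fun k => ¬ k < t), m :=
            Finset.sum_le_sum fun k _ => min_le_left _ _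
        _ = ((range (L + 1)).filter (fun k => ¬ k < t)).card * m := by
            rw [Finset.sum_const, smul_eq_mul]
        _ ≤ (L + 1 - t) * m := by
            apply Nat.mul_le_mul_right
            calc ((range (L + 1)).filter (fun k => ¬ k < t)).card
                ≤ (Finset.Ico t (L + 1)).card := by
                  apply Finset.card_le_card
                  intro k hk
                  simp only [mem_filter, mem_range, Finset.mem_Ico] at hk ⊢
                  omega
              _ = L + 1 - t := Nat.card_Ico t (L + 1)
  -- geometric part ≤ 2m
  have hgeo : ∑ k ∈ range t, b ^ k ≤ 2 * m := by
    rcases Nat.lt_or_ge m 2 with h | h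
    · have : m = 1 := by omega
      subst this
      simp [htdef, Nat.clog_one_right]
    · have ht1 : 1 ≤ t := Nat.clog_pos (by omega) h
      calc ∑ k ∈ range t, b ^ k ≤ 2 * b ^ (t - 1) := mygeom_le b hb t ht1
        _ ≤ 2 * m := by
            have h4 := Nat.pow_pred_clog_lt_self (b := b) (by omega) (x := m) h
            rw [Nat.pred_eq_sub_one, ← htdef] at h4
            omega
  -- combine
  have final : ∑ k ∈ range (L + 1), min m (b ^ k) ≤ m * (L - t) + 3 * m := by
    have h1 : (L + 1 - t) * m ≤ (L - t) * m + m := by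
      have : L + 1 - t ≤ (L - t) + 1 := by omega
      calc (L + 1 - t) * m ≤ ((L - t) + 1) * m := Nat.mul_le_mul_right _ this
        _ = (L - t) * m + m := by ring
    calc ∑ k ∈ range (L + 1), min m (b ^ k)
        ≤ (∑ k ∈ range t, b ^ k) + (L + 1 - t) * m := hsplit
      _ ≤ 2 * m + ((L - t) * m + m) := Nat.add_le_add hgeo h1
      _ = m * (L - t) + 3 * m := by ring
  calc (P.biUnion fun p => (range (L + 1)).image fun k => p.take k).card
      ≤ ∑ k ∈ range (L + 1), (P.image fun p => p.take k).card := step1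
    _ ≤ ∑ k ∈ range (L + 1), min m (b ^ k) := Finset.sum_le_sum hlev
    _ ≤ m * (L - t) + 3 * m := final
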